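/- arXiv:1908.09125 — 3 statements merged into one kernel-verified Lean document; each statement's English description precedes it below -/
import Mathlib

section
/- Let w be a word over a finite ordered alphabet Σ. Then w is the Burrows–Wheeler transform of a primitive word if and only if the standard permutation σ_w of w is cyclic. -/
namespace DollarBWT

/-- The list of all rotations of a word. -/
def rotations {α : Type*} (v : List α) : List (List α) :=
  (List.range v.length).map fun k => v.rotate k

/-- The Burrows–Wheeler transform of a word `v`: sort (stably) the multiset of all
rotations of `v` lexicographically and take the last character of each rotation. -/
def bwt {α : Type*} [LinearOrder α] (v : List α) : List α :=
  ((rotations v).insertionSort (· ≤ ·)).filterMap List.getLast?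

/-- `dol w i` inserts the sentinel `⊥` (playing the role of `$`, smaller than every
letter of the alphabet) at (1-based) position `i` of the word `w`. -/
def dol {α : Type*} [LinearOrder α] (w : List α) (i : ℕ) : List (WithBot α) :=
  (w.map (fun a => (a : WithBot α))).insertIdx (i - 1) ⊥

/-- Position `i` (1-based, `1 ≤ i ≤ |w|+1`) is *nice* for `w` if there is a word `v`
of the same length as `w` with `BWT(v$) = dol(w,i)`. -/
def Nice {α : Type*} [LinearOrder α] (w : List α) (i : ℕ) : Prop :=
  ∃ v : List α, v.length = w.length ∧
    bwt (v.map (fun a => (a : WithBot α)) ++ [(⊥ : WithBot α)]) = dol w i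

/-- `σ` (a permutation of `Fin n`, thought of as the positions `1,…,n` of `w`) is the
standard permutation of the word `w`. -/
def IsStdPerm {α : Type*} [LinearOrder α] {n : ℕ} (w : List α)
    (σ : Equiv.Perm (Fin n)) : Prop :=
  ∃ h : w.length = n, ∀ i j : Fin n,
    σ i < σ j ↔ (w.get (Fin.cast h.symm i) < w.get (Fin.cast h.symm j)
      ∨ (w.get (Fin.cast h.symm i) = w.get (Fin.cast h.symm j) ∧ i < j))

/-- Application of a permutation of `Fin n` in 1-based terms: `ap σ k` is the image of
`k ∈ {1,…,n}` under `σ` read as a permutation of `{1,…,n}` (junk: `k` outside). -/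
def ap {n : ℕ} (σ : Equiv.Perm (Fin n)) (k : ℕ) : ℕ :=
  if h : 1 ≤ k ∧ k ≤ n then ((σ ⟨k - 1, by omega⟩ : Fin n) : ℕ) + 1 else k

/-- `C` is a cycle of the permutation `σ`: a minimal non-empty subset with `σ(C) = C`. -/
def IsCycleOf {β : Type*} (σ : Equiv.Perm β) (C : Set β) : Prop :=
  C.Nonempty ∧ σ '' C = C ∧ ∀ D : Set β, D.Nonempty → D ⊆ C → σ '' D = D → D = C

/-- The number of cycles in the cycle decomposition of `σ` (fixpoints count as cycles). -/
noncomputable def numCycles {β : Type*} (σ : Equiv.Perm β) : ℕ :=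
  {C : Set β | IsCycleOf σ C}.ncard

/-- A permutation is cyclic if its cycle decomposition consists of a single cycle,
i.e. the whole domain is one cycle. -/
def PermCyclic {β : Type*} (σ : Equiv.Perm β) : Prop :=
  IsCycleOf σ (Set.univ : Set β)

/-- `C ⊆ {1,…,n}` (in 1-based terms) is a cycle of `σ`. -/
def IsCycleSet1 {n : ℕ} (σ : Equiv.Perm (Fin n)) (C : Set ℕ) : Prop :=
  ∃ C' : Set (Fin n), IsCycleOf σ C' ∧ C = (fun x : Fin n => (x : ℕ) + 1) '' C'

/-- A word is primitive if it is not a proper power. -/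
def Primitive {α : Type*} (v : List α) : Prop :=
  ∀ (u : List α) (k : ℕ), v = (List.replicate k u).flatten → k = 1

/-- `σ` equals the product of the cycles given (in 1-based terms) by the lists in `Ls`:
the lists are disjoint, consist of elements of `{1,…,n}`, `σ` maps each entry of each
list to the (cyclically) next one, and fixes everything else. -/
def IsCyclesProd {n : ℕ} (σ : Equiv.Perm (Fin n)) (Ls : List (List ℕ)) : Prop :=
  Ls.flatten.Nodup ∧ (∀ L ∈ Ls, L ≠ []) ∧ (∀ x ∈ Ls.flatten, 1 ≤ x ∧ x ≤ n) ∧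
  (∀ L ∈ Ls, ∀ (t : ℕ) (ht : t < L.length),
      ap σ (L.get ⟨t, ht⟩) = L.get ⟨(t + 1) % L.length, Nat.mod_lt _ (by omega)⟩) ∧
  (∀ x : ℕ, 1 ≤ x → x ≤ n → x ∉ Ls.flatten → ap σ x = x)

/-- `S ⊆ {1,…,n}` (1-based) is a pseudo-cycle of `σ` witnessed by the partition
`S = Sl ∪ Sr` with `Sl < Sr` and `σ(S) = (Sl − 1) ∪ Sr`. -/
def IsPseudoCycleWith {n : ℕ} (σ : Equiv.Perm (Fin n)) (S Sl Sr : Set ℕ) : Prop :=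
  S.Nonempty ∧ S ⊆ Set.Icc 1 n ∧ Sl ∪ Sr = S ∧ Disjoint Sl Sr ∧
    (∀ x ∈ Sl, ∀ y ∈ Sr, x < y) ∧
    ap σ '' S = ((fun x => x - 1) '' Sl) ∪ Sr

/-- The critical interval `[a+1, b]` of a pseudo-cycle with partition `Sl, Sr`,
where `a = max Sl` (`0` if `Sl = ∅`) and `b = min Sr` (`n+1` if `Sr = ∅`). -/
noncomputable def criticalInterval (n : ℕ) (Sl Sr : Set ℕ) : Set ℕ :=
  Set.Icc (sSup Sl + 1) (sInf (insert (n + 1) Sr))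

/-- `unshift(U, i) = { x ∈ U : x < i } ∪ { x − 1 : x ∈ U, x > i }`. -/
def unshift (U : Set ℕ) (i : ℕ) : Set ℕ :=
  {x | x ∈ U ∧ x < i} ∪ (fun x => x - 1) '' {x | x ∈ U ∧ i < x}

/-- The number of nice positions of `w`. -/
noncomputable def niceCount {α : Type*} [LinearOrder α] (w : List α) : ℕ :=
  {i : ℕ | 1 ≤ i ∧ i ≤ w.length + 1 ∧ Nice w i}.ncard

/-- `L`, the maximum over all cycles `C` of `σ` of the (1-based) minimum of `C`. -/
noncomputable def Lval {n : ℕ} (σ : Equiv.Perm (Fin n)) : ℕ :=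
  sSup ((fun C : Set (Fin n) => sInf ((fun x : Fin n => (x : ℕ) + 1) '' C)) ''
    {C | IsCycleOf σ C})

/-- The number of bad pairs of `σ`: cycles `C` which are not the cycle with the largest
minimum and such that `min C + 1 ∈ C` (all in 1-based terms). -/
noncomputable def badPairCount {n : ℕ} (σ : Equiv.Perm (Fin n)) : ℕ :=
  {C : Set (Fin n) | IsCycleOf σ C ∧
    sInf ((fun x : Fin n => (x : ℕ) + 1) '' C) < Lval σ ∧
    sInf ((fun x : Fin n => (x : ℕ) + 1) '' C) + 1 ∈
      (fun x : Fin n => (x : ℕ) + 1) '' C}.ncard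


set_option linter.unusedSectionVars false
set_option maxHeartbeats 1000000

section Aux
variable {α : Type*} [LinearOrder α]

theorem cons_lt_cons_iff' (a b : α) (l l' : List α) :
    (a :: l) < (b :: l') ↔ a < b ∨ (a = b ∧ l < l') := by
  show List.Lex _ _ _ ↔ _
  constructor
  · intro h
    cases h with
    | cons h => exact Or.inr ⟨rfl, h⟩
    | rel h => exact Or.inl h
  · rintro (h | ⟨rfl, h⟩)
    · exact List.Lex.rel h
    · exact List.Lex.cons h

theorem append_lt_append_iff (c : α) :
    ∀ (l l' : List α), l.length = l'.length → ((l ++ [c] < l' ++ [c]) ↔ l < l')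
  | [], [], _ => by simp [lt_irrefl]
  | [], (b :: l'), h => by simp at h
  | (a :: l), [], h => by simp at h
  | (a :: l), (b :: l'), h => by
    simp only [List.cons_append, cons_lt_cons_iff']
    rw [append_lt_append_iff c l l' (by simpa using h)]

theorem flatten_replicate_length (u : List α) : ∀ k, ((List.replicate k u).flatten).length = k * u.length
  | 0 => by simp
  | (k+1) => by
    simp [List.replicate_succ, flatten_replicate_length u k, Nat.succ_mul, Nat.add_comm]

theorem flatten_replicate_add (u : List α) (a b : ℕ) :
    (List.replicate (a + b) u).flatten = (List.replicate a u).flatten ++ (List.replicate b u).flatten := by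
  rw [List.replicate_add, List.flatten_append]

theorem comm_lists (u m : List α) : u ++ m = m ++ u →
    ∃ (t : List α) (a b : ℕ), u = (List.replicate a t).flatten ∧ m = (List.replicate b t).flatten := by
  generalize hn : u.length + m.length = n
  induction n using Nat.strong_induction_on generalizing u m with
  | _ n ih =>
  intro hcomm
  rcases eq_or_ne u [] with rfl | hu
  · exact ⟨m, 0, 1, by simp⟩
  rcases eq_or_ne m [] with rfl | hm
  · exact ⟨u, 1, 0, by simp⟩
  rcases le_total u.length m.length with hle | hle
  · have hm2 : u = m.take u.length := by
      have := congrArg (List.take u.length) hcomm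
      rwa [List.take_left, List.take_append_of_le_length hle] at this
    have hsplit : m = u ++ m.drop u.length := by
      conv_lhs => rw [← List.take_append_drop u.length m, ← hm2]
    have hcomm' : u ++ m.drop u.length = m.drop u.length ++ u := by
      have : u ++ (u ++ m.drop u.length) = (u ++ m.drop u.length) ++ u := by
        rw [← hsplit]; exact hcomm
      rw [List.append_assoc] at this
      exact List.append_cancel_left this
    have hlen : u.length + (m.drop u.length).length < n := by
      subst hn
      have : 0 < u.length := List.length_pos_iff.mpr hu
      simp only [List.length_drop]
      omega
    obtain ⟨t, a, b, h1, h2⟩ := ih _ hlen u (m.drop u.length) rfl hcomm'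
    refine ⟨t, a, a + b, h1, ?_⟩
    rw [hsplit, flatten_replicate_add, ← h1, ← h2]
  · have hm2 : m = u.take m.length := by
      have := congrArg (List.take m.length) hcomm.symm
      rwa [List.take_left, List.take_append_of_le_length hle] at this
    have hsplit : u = m ++ u.drop m.length := by
      conv_lhs => rw [← List.take_append_drop m.length u, ← hm2]
    have hcomm' : m ++ u.drop m.length = u.drop m.length ++ m := by
      have : m ++ (m ++ u.drop m.length) = (m ++ u.drop m.length) ++ m := by
        rw [← hsplit]; exact hcomm.symm
      rw [List.append_assoc] at this
      exact List.append_cancel_left this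
    have hlen : m.length + (u.drop m.length).length < n := by
      subst hn
      have : 0 < m.length := List.length_pos_iff.mpr hm
      simp only [List.length_drop]
      omega
    obtain ⟨t, a, b, h1, h2⟩ := ih _ hlen m (u.drop m.length) rfl hcomm'
    refine ⟨t, a + b, a, ?_, h1⟩
    rw [hsplit, flatten_replicate_add, ← h1, ← h2]

theorem not_primitive_of_rotate (v : List α) (d : ℕ) (h0 : 0 < d) (hd : d < v.length)
    (hr : v.rotate d = v) : ¬ Primitive v := by
  intro hp
  have hsplit : v = v.take d ++ v.drop d := (List.take_append_drop d v).symm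
  have hrot : v = v.drop d ++ v.take d := by
    conv_lhs => rw [← hr, List.rotate_eq_drop_append_take hd.le]
  have hcomm : v.take d ++ v.drop d = v.drop d ++ v.take d := by rw [← hsplit, ← hrot]
  obtain ⟨t, a, b, h1, h2⟩ := comm_lists _ _ hcomm
  have hv : v = (List.replicate (a + b) t).flatten := by
    rw [hsplit, flatten_replicate_add, ← h1, ← h2]
  have hab := hp t (a + b) hv
  have ha : a ≠ 0 := by
    rintro rfl
    simp only [List.replicate_zero, List.flatten_nil] at h1
    rw [List.take_eq_nil_iff] at h1
    rcases h1 with h1 | h1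
    · omega
    · rw [h1] at hd; simp at hd
  have hb : b ≠ 0 := by
    rintro rfl
    simp only [List.replicate_zero, List.flatten_nil] at h2
    rw [List.drop_eq_nil_iff] at h2
    omega
  omega

theorem primitive_of_distinct (v : List α) (hv : v ≠ [])
    (h : ∀ d, 0 < d → d < v.length → v.rotate d ≠ v) : Primitive v := by
  rintro u (_|_|k) hk
  · simp only [List.replicate_zero, List.flatten_nil] at hk
    exact absurd hk hv
  · rfl
  exfalso
  set K := k + 2 with hK
  have hu : u ≠ [] := by
    rintro rfl
    have he : ((List.replicate K ([] : List α)).flatten) = [] := by simp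
    rw [he] at hk
    exact hv hk
  have hul : 0 < u.length := List.length_pos_iff.mpr hu
  have hvl : v.length = K * u.length := by rw [hk, flatten_replicate_length]
  have hsplit : v = u ++ (List.replicate (K - 1) u).flatten := by
    rw [hk]
    have hKe : K = 1 + (K - 1) := by omega
    rw [hKe, flatten_replicate_add]
    simp
  have hrot : v.rotate u.length = v := by
    have hle : u.length ≤ v.length := by rw [hvl]; nlinarith
    rw [List.rotate_eq_drop_append_take hle]
    have hdrop : v.drop u.length = (List.replicate (K - 1) u).flatten := by
      rw [hsplit]; simp
    have htake : v.take u.length = u := by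
      rw [hsplit]; simp
    rw [hdrop, htake]
    conv_rhs => rw [hk]
    have hKe : K = (K - 1) + 1 := by omega
    rw [hKe, flatten_replicate_add]
    simp
  exact h u.length hul (by rw [hvl]; nlinarith) hrot


theorem rotate_append_singleton (xs : List α) (c : α) :
    (xs ++ [c]).rotate ((xs ++ [c]).length - 1) = c :: xs := by
  have hlen : (xs ++ [c]).length - 1 = xs.length := by simp
  rw [hlen, List.rotate_eq_drop_append_take (by simp), List.drop_left, List.take_left]
  rfl

theorem rotr_eq (l : List α) (h : l ≠ []) :
    l.rotate (l.length - 1) = l.getLast h :: l.dropLast := by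
  have h2 := rotate_append_singleton l.dropLast (l.getLast h)
  rw [List.dropLast_append_getLast h] at h2
  exact h2

theorem filterMap_getLast?_spec : ∀ (L : List (List α)) (w : List α),
    (∀ x ∈ L, x ≠ []) → L.filterMap List.getLast? = w →
    L.length = w.length ∧ ∀ (i : ℕ) (h1 : i < L.length) (h2 : i < w.length),
      (L[i]).getLast? = some (w[i])
  | [], w, _, hw => by
    simp only [List.filterMap_nil] at hw
    subst hw
    exact ⟨rfl, by intro i h1 h2; simp at h1⟩
  | (x :: L), w, hne, hw => by
    have hx : x ≠ [] := hne x (by simp)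
    rw [List.filterMap_cons, List.getLast?_eq_getLast hx] at hw
    obtain ⟨hl, hs⟩ := filterMap_getLast?_spec L (L.filterMap List.getLast?)
      (fun y hy => hne y (by simp [hy])) rfl
    subst hw
    refine ⟨by simp [hl], ?_⟩
    rintro (_ | i) h1 h2
    · simp [List.getLast?_eq_getLast hx]
    · simpa using hs i (by simpa using h1) (by simpa using h2)

theorem isStdPerm_unique {N : ℕ} (w : List α) (σ τ : Equiv.Perm (Fin N))
    (hσ : IsStdPerm w σ) (hτ : IsStdPerm w τ) : σ = τ := by
  obtain ⟨h1, hp1⟩ := hσ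
  obtain ⟨h2, hp2⟩ := hτ
  have key : ∀ i j, σ i < σ j ↔ τ i < τ j := by
    intro i j
    rw [hp1 i j, hp2 i j]
  have hmono : StrictMono (τ ∘ σ.symm) := by
    intro a b hab
    exact (key (σ.symm a) (σ.symm b)).mp (by simpa using hab)
  have hsurj : Function.Surjective (τ ∘ σ.symm) := fun x => ⟨σ (τ.symm x), by simp⟩
  have hiso := Subsingleton.elim (StrictMono.orderIsoOfSurjective _ hmono hsurj)
    (OrderIso.refl (Fin N))
  have happ : ∀ a, τ (σ.symm a) = a := by
    intro a
    have h3 := congrFun (StrictMono.coe_orderIsoOfSurjective _ hmono hsurj) a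
    rw [hiso] at h3
    exact h3.symm
  refine Equiv.ext fun i => ?_
  have := happ (σ i)
  rw [Equiv.symm_apply_apply] at this
  exact this.symm

section cyclic

variable {N : ℕ} (π : Equiv.Perm (Fin N))

theorem pow_sub_fix {i : Fin N} {a b : ℕ} (hab : a ≤ b) (h : (π ^ a) i = (π ^ b) i) :
    (π ^ (b - a)) i = i := by
  have h2 : (π ^ a) ((π ^ (b - a)) i) = (π ^ a) i := by
    rw [← Equiv.Perm.mul_apply, ← pow_add]
    rw [Nat.add_sub_cancel' hab]
    exact h.symm
  exact (π ^ a).injective h2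

theorem pow_mul_fix {i : Fin N} {d : ℕ} (hd : (π ^ d) i = i) (q : ℕ) :
    (π ^ (d * q)) i = i := by
  induction q with
  | zero => simp
  | succ q ih =>
    have : d * (q + 1) = d * q + d := by ring
    rw [this, pow_add, Equiv.Perm.mul_apply, hd, ih]

theorem pow_mod_fix {i : Fin N} {d : ℕ} (hd : (π ^ d) i = i) (k : ℕ) :
    (π ^ k) i = (π ^ (k % d)) i := by
  conv_lhs => rw [← Nat.mod_add_div k d]
  rw [pow_add, Equiv.Perm.mul_apply, pow_mul_fix π hd]

theorem exists_pos_period (i : Fin N) [NeZero N] : ∃ d, 0 < d ∧ (π ^ d) i = i := by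
  obtain ⟨a, b, hab, heq⟩ := Finite.exists_ne_map_eq_of_infinite (fun k : ℕ => (π ^ k) i)
  rcases Nat.lt_or_ge a b with h | h
  · exact ⟨b - a, by omega, pow_sub_fix π h.le heq⟩
  · have hba : b < a := by omega
    exact ⟨a - b, by omega, pow_sub_fix π hba.le heq.symm⟩

theorem permCyclic_orbit (hc : PermCyclic π) (i j : Fin N) : ∃ k, (π ^ k) i = j := by
  have hN : NeZero N := ⟨by
    rintro rfl
    exact (IsEmpty.false i)⟩
  set O : Set (Fin N) := Set.range (fun k : ℕ => (π ^ k) i) with hO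
  obtain ⟨d, hd0, hd⟩ := exists_pos_period π i
  have hstep : ∀ k : ℕ, π ((π ^ k) i) = (π ^ (k + 1)) i := by
    intro k
    rw [pow_succ', Equiv.Perm.mul_apply]
  have hinv : π '' O = O := by
    ext x
    simp only [hO, Set.mem_image, Set.mem_range]
    constructor
    · rintro ⟨y, ⟨k, rfl⟩, rfl⟩
      exact ⟨k + 1, (hstep k).symm⟩
    · rintro ⟨k, rfl⟩
      rcases k with _ | k
      · refine ⟨(π ^ (d - 1)) i, ⟨d - 1, rfl⟩, ?_⟩
        have hd1 : d - 1 + 1 = d := by omega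
        rw [hstep, hd1, hd]
        rfl
      · exact ⟨(π ^ k) i, ⟨k, rfl⟩, hstep k⟩
  have hOuniv : O = Set.univ := hc.2.2 O ⟨i, 0, by simp⟩ (Set.subset_univ _) hinv
  have : j ∈ O := by rw [hOuniv]; trivial
  exact this

theorem permCyclic_le (hc : PermCyclic π) (i : Fin N) (d : ℕ) (h0 : 0 < d)
    (hd : (π ^ d) i = i) : N ≤ d := by
  have hsurj : Set.SurjOn (fun t => (π ^ t) i) ↑(Finset.range d) ↑(Finset.univ : Finset (Fin N)) := by
    intro j _
    obtain ⟨k, hk⟩ := permCyclic_orbit π hc i j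
    refine ⟨k % d, Finset.mem_coe.mpr (Finset.mem_range.mpr (Nat.mod_lt _ h0)), ?_⟩
    · show (π ^ (k % d)) i = j
      rw [← pow_mod_fix π hd k]
      exact hk
  have := Finset.card_le_card_of_surjOn _ hsurj
  simpa using this

theorem permCyclic_pow_card (hc : PermCyclic π) : π ^ N = 1 := by
  have hn : 0 < N := by
    obtain ⟨i, _⟩ := hc.1
    exact i.pos
  refine Equiv.ext fun i => ?_
  rw [Equiv.Perm.one_apply]
  have hmaps : ∀ a ∈ Finset.range (N + 1), (π ^ a) i ∈ (Finset.univ : Finset (Fin N)) :=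
    fun a _ => Finset.mem_univ _
  obtain ⟨a, ha, b, hb, hab, heq⟩ :=
    Finset.exists_ne_map_eq_of_card_lt_of_maps_to (by simp) hmaps
  simp only [Finset.mem_range] at ha hb
  have key : ∀ x y : ℕ, x < y → y < N + 1 → (π ^ x) i = (π ^ y) i → (π ^ N) i = i := by
    intro x y hxy hyN h
    have hfix := pow_sub_fix π hxy.le h
    have hle := permCyclic_le π hc i (y - x) (by omega) hfix
    have : y - x = N := by omega
    rw [this] at hfix
    exact hfix
  rcases Nat.lt_or_ge a b with h | h
  · exact key a b h hb heq
  · exact key b a (by omega) ha heq.symm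

theorem permCyclic_inj (hc : PermCyclic π) (i : Fin N) {a b : ℕ} (ha : a < N) (hb : b < N)
    (h : (π ^ a) i = (π ^ b) i) : a = b := by
  by_contra hne
  have key : ∀ x y : ℕ, x < y → y < N → (π ^ x) i = (π ^ y) i → False := by
    intro x y hxy hyN hxyeq
    have hfix := pow_sub_fix π hxy.le hxyeq
    have := permCyclic_le π hc i (y - x) (by omega) hfix
    omega
  rcases Nat.lt_or_ge a b with h2 | h2
  · exact key a b h2 hb h
  · exact key b a (by omega) ha h.symm

theorem permCyclic_surj (hc : PermCyclic π) (i j : Fin N) : ∃ t, t < N ∧ (π ^ t) i = j := by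
  have hn : 0 < N := i.pos
  obtain ⟨k, hk⟩ := permCyclic_orbit π hc i j
  have hfix : (π ^ N) i = i := by rw [permCyclic_pow_card π hc]; rfl
  exact ⟨k % N, Nat.mod_lt _ hn, by rw [← pow_mod_fix π hfix k]; exact hk⟩

theorem image_flip {β : Type*} (e : Equiv.Perm β) (D : Set β) (h : ⇑e '' D = D) :
    ⇑e⁻¹ '' D = D := by
  conv_lhs => rw [← h]
  rw [← Set.image_comp]
  have : ⇑e⁻¹ ∘ ⇑e = id := by
    funext x
    simp
  rw [this, Set.image_id]

theorem permCyclic_inv (hc : PermCyclic π) : PermCyclic π⁻¹ := by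
  refine ⟨hc.1, image_flip π _ hc.2.1, ?_⟩
  intro D hne hsub hinv
  refine hc.2.2 D hne hsub ?_
  have := image_flip π⁻¹ D hinv
  simpa using this

end cyclic


theorem length_rotations {α : Type*} (v : List α) : (rotations v).length = v.length := by
  simp [rotations]

theorem mem_rotations {α : Type*} (v x : List α) :
    x ∈ rotations v ↔ ∃ k, k < v.length ∧ x = v.rotate k := by
  simp only [rotations, List.mem_map, List.mem_range]
  constructor
  · rintro ⟨k, hk, rfl⟩
    exact ⟨k, hk, rfl⟩
  · rintro ⟨k, hk, rfl⟩
    exact ⟨k, hk, rfl⟩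

theorem rotate_mem_rotations {α : Type*} (v : List α) (hv : v ≠ []) (k : ℕ) :
    v.rotate k ∈ rotations v := by
  rw [mem_rotations]
  refine ⟨k % v.length, Nat.mod_lt _ (List.length_pos_iff.mpr hv), (List.rotate_mod v k).symm⟩

theorem reverse_dir (w : List α) (σ : Equiv.Perm (Fin w.length)) (hσ : IsStdPerm w σ)
    (hc : PermCyclic σ) : ∃ v : List α, Primitive v ∧ bwt v = w := by
  classical
  obtain ⟨i0, -⟩ := hc.1
  have hN : 0 < w.length := i0.pos
  set π : Equiv.Perm (Fin w.length) := σ⁻¹ with hπ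
  have hc' : PermCyclic π := permCyclic_inv σ hc
  set z : Fin w.length := ⟨0, hN⟩ with hz
  set p : ℕ → Fin w.length := fun t => (π ^ t) z with hpdef
  have hσp : ∀ t, σ (p (t + 1)) = p t := by
    intro t
    show σ ((π ^ (t + 1)) z) = (π ^ t) z
    rw [pow_succ', Equiv.Perm.mul_apply]
    exact σ.apply_symm_apply _
  have hfixN : (π ^ w.length) z = z := by rw [permCyclic_pow_card π hc']; rfl
  have hper : ∀ t, p (t + w.length) = p t := by
    intro t
    show (π ^ (t + w.length)) z = (π ^ t) z
    rw [pow_add, Equiv.Perm.mul_apply, hfixN]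
  have hmod : ∀ s t : ℕ, s % w.length = t % w.length → p s = p t := by
    intro s t h
    show (π ^ s) z = (π ^ t) z
    rw [pow_mod_fix π hfixN s, pow_mod_fix π hfixN t, h]
  have hinj : ∀ a b : ℕ, a < w.length → b < w.length → p a = p b → a = b := by
    intro a b ha hb h
    exact permCyclic_inj π hc' z ha hb h
  have hsurjp : ∀ j : Fin w.length, ∃ t, t < w.length ∧ p t = j :=
    fun j => permCyclic_surj π hc' z j
  obtain ⟨he, hstd0⟩ := hσ
  have hstd : ∀ i j : Fin w.length, σ i < σ j ↔
      (w.get i < w.get j ∨ (w.get i = w.get j ∧ i < j)) := by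
    intro i j
    have h0 := hstd0 i j
    have h1 : Fin.cast he.symm i = i := Fin.ext rfl
    have h2 : Fin.cast he.symm j = j := Fin.ext rfl
    rwa [h1, h2] at h0
  set v : List α := (List.range w.length).map (fun t => w.get (p (t + 1))) with hvdef
  have hvlen : v.length = w.length := by simp [hvdef]
  have hvne : v ≠ [] := by
    intro h
    rw [h] at hvlen
    simp at hvlen
    omega
  have hρlen : ∀ t : ℕ, (v.rotate t).length = w.length := fun t => by
    rw [List.length_rotate, hvlen]
  have hρne : ∀ t : ℕ, v.rotate t ≠ [] := by
    intro t h
    have h2 := hρlen t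
    rw [h] at h2
    simp at h2
    omega
  have hvget : ∀ (k : ℕ) (hk : k < v.length), v[k] = w.get (p (k + 1)) := by
    intro k hk
    simp [hvdef]
  have hρget : ∀ (t k : ℕ) (hk : k < (v.rotate t).length),
      (v.rotate t)[k] = w.get (p (k + t + 1)) := by
    intro t k hk
    rw [List.getElem_rotate, hvget _ (Nat.mod_lt _ (by omega))]
    congr 1
    apply hmod
    have h1 : (k + t) % v.length ≡ k + t [MOD v.length] := Nat.mod_modEq _ _
    have h2 := h1.add_right 1
    rw [hvlen] at h2 ⊢
    exact h2
  have hlast : ∀ t : ℕ, (v.rotate t).getLast (hρne t) = w.get (p t) := by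
    intro t
    rw [List.getLast_eq_getElem, hρget t ((v.rotate t).length - 1) (by rw [hρlen]; omega)]
    congr 1
    have h1 : (v.rotate t).length - 1 + t + 1 = t + w.length := by rw [hρlen]; omega
    rw [h1, hper]
  have hcons : ∀ t : ℕ, v.rotate t = w.get (p (t + 1)) :: (v.rotate (t + 1)).dropLast := by
    intro t
    have h1 := rotr_eq (v.rotate (t + 1)) (hρne (t + 1))
    rw [List.rotate_rotate] at h1
    have he2 : t + 1 + ((v.rotate (t + 1)).length - 1) = t + w.length := by
      rw [hρlen]; omega
    rw [he2] at h1
    have he3 : v.rotate (t + w.length) = v.rotate t := by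
      rw [← List.rotate_rotate, show w.length = (v.rotate t).length from (hρlen t).symm,
        List.rotate_length]
    rw [he3, hlast (t + 1)] at h1
    exact h1
  have keylex : ∀ m : ℕ, m ≤ w.length → ∀ s t : ℕ, p s < p t →
      ((v.rotate s).take m < (v.rotate t).take m ∨
       ((v.rotate s).take m = (v.rotate t).take m ∧ p (s + m) < p (t + m))) := by
    intro m
    induction m with
    | zero =>
      intro _ s t h
      right
      exact ⟨rfl, by simpa using h⟩
    | succ m ih =>
      intro hm s t h
      have hσs : σ (p (s + 1)) < σ (p (t + 1)) := by rw [hσp, hσp]; exact h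
      rw [hstd] at hσs
      have htk : ∀ u : ℕ, (v.rotate u).take (m + 1) =
          w.get (p (u + 1)) :: (v.rotate (u + 1)).take m := by
        intro u
        conv_lhs => rw [hcons u]
        rw [List.take_succ_cons]
        congr 1
        rw [List.dropLast_eq_take, List.take_take]
        congr 1
        rw [hρlen]
        omega
      rcases hσs with hlt | ⟨heq, hlt⟩
      · left
        rw [htk s, htk t, cons_lt_cons_iff']
        exact Or.inl hlt
      · rcases ih (by omega) (s + 1) (t + 1) hlt with h2 | ⟨h2, h3⟩
        · left
          rw [htk s, htk t, cons_lt_cons_iff']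
          exact Or.inr ⟨heq, h2⟩
        · right
          constructor
          · rw [htk s, htk t, heq, h2]
          · have e1 : s + (m + 1) = s + 1 + m := by omega
            have e2 : t + (m + 1) = t + 1 + m := by omega
            rw [e1, e2]
            exact h3
  have htake_all : ∀ s : ℕ, (v.rotate s).take w.length = v.rotate s := by
    intro s
    rw [show w.length = (v.rotate s).length from (hρlen s).symm, List.take_length]
  have hpropagate : ∀ s t : ℕ, v.rotate s = v.rotate t →
      v.rotate (s + 1) = v.rotate (t + 1) := by
    intro s t hst
    have h1 := hcons s
    rw [hst, hcons t] at h1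
    injection h1 with hh htl
    calc v.rotate (s + 1)
        = (v.rotate (s + 1)).dropLast ++ [(v.rotate (s + 1)).getLast (hρne _)] :=
          (List.dropLast_append_getLast (hρne _)).symm
      _ = (v.rotate (t + 1)).dropLast ++ [(v.rotate (t + 1)).getLast (hρne _)] := by
          rw [hlast (s + 1), hlast (t + 1), ← htl, ← hh]
      _ = v.rotate (t + 1) := List.dropLast_append_getLast (hρne _)
  have hstrict : ∀ s t : ℕ, p s < p t → v.rotate s < v.rotate t := by
    intro s t h
    rcases keylex w.length le_rfl s t h with hlt | ⟨heq, -⟩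
    · rwa [htake_all, htake_all] at hlt
    · exfalso
      rw [htake_all, htake_all] at heq
      have hρeq : ∀ m : ℕ, v.rotate (s + m) = v.rotate (t + m) := by
        intro m
        induction m with
        | zero => simpa using heq
        | succ m ih =>
          have h2 := hpropagate _ _ ih
          rwa [show s + m + 1 = s + (m + 1) by omega, show t + m + 1 = t + (m + 1) by omega] at h2
      have hplt : ∀ m : ℕ, p (s + m) < p (t + m) := by
        intro m
        induction m with
        | zero => simpa using h
        | succ m ih =>
          have hσs : σ (p (s + m + 1)) < σ (p (t + m + 1)) := by
            rw [hσp, hσp]; exact ih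
          rw [hstd] at hσs
          have hweq : w.get (p (s + m + 1)) = w.get (p (t + m + 1)) := by
            have h1 := hcons (s + m)
            rw [hρeq m, hcons (t + m)] at h1
            injection h1 with hh _
            exact hh.symm
          rcases hσs with hl | ⟨-, hl⟩
          · rw [hweq] at hl
            exact absurd hl (lt_irrefl _)
          · rwa [show s + (m + 1) = s + m + 1 by omega, show t + (m + 1) = t + m + 1 by omega]
      have hbij : ∀ s0 : ℕ, Function.Bijective (fun m : Fin w.length => p (s0 + (m : ℕ))) := by
        intro s0
        rw [← Finite.injective_iff_bijective]
        intro a b hab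
        simp only at hab
        have ha' : p (s0 + (a : ℕ)) = p ((s0 + (a : ℕ)) % w.length) :=
          hmod _ _ (Nat.mod_mod_of_dvd _ dvd_rfl).symm
        have hb' : p (s0 + (b : ℕ)) = p ((s0 + (b : ℕ)) % w.length) :=
          hmod _ _ (Nat.mod_mod_of_dvd _ dvd_rfl).symm
        have h3 : (s0 + (a : ℕ)) % w.length = (s0 + (b : ℕ)) % w.length :=
          hinj _ _ (Nat.mod_lt _ hN) (Nat.mod_lt _ hN) (ha'.symm.trans (hab.trans hb'))
        have h4 : (a : ℕ) ≡ (b : ℕ) [MOD w.length] := Nat.ModEq.add_left_cancel' s0 h3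
        have h5 : (a : ℕ) = (b : ℕ) := by
          have := h4
          unfold Nat.ModEq at this
          rwa [Nat.mod_eq_of_lt a.isLt, Nat.mod_eq_of_lt b.isLt] at this
        exact Fin.ext h5
      have hnonempty : (Finset.univ : Finset (Fin w.length)).Nonempty := ⟨z, Finset.mem_univ z⟩
      have hlt2 : ∑ m : Fin w.length, (p (s + (m : ℕ)) : ℕ) <
          ∑ m : Fin w.length, (p (t + (m : ℕ)) : ℕ) := by
        apply Finset.sum_lt_sum_of_nonempty hnonempty
        intro m _
        exact hplt (m : ℕ)
      have hsum1 := Function.Bijective.sum_comp (hbij s) (fun j : Fin w.length => (j : ℕ))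
      have hsum2 := Function.Bijective.sum_comp (hbij t) (fun j : Fin w.length => (j : ℕ))
      rw [hsum1, hsum2] at hlt2
      exact absurd hlt2 (lt_irrefl _)
  have hprim : Primitive v := by
    apply primitive_of_distinct v hvne
    intro d h0 hdlen heq
    rw [hvlen] at hdlen
    have hne' : p d ≠ p 0 := by
      intro hpe
      have := hinj d 0 hdlen hN hpe
      omega
    rcases hne'.lt_or_gt with hl | hl
    · have h2 := hstrict d 0 hl
      rw [List.rotate_zero, heq] at h2
      exact absurd h2 (lt_irrefl _)
    · have h2 := hstrict 0 d hl
      rw [List.rotate_zero, heq] at h2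
      exact absurd h2 (lt_irrefl _)
  have hρinj : ∀ s t : ℕ, v.rotate s = v.rotate t → p s = p t := by
    intro s t hstq
    by_contra hne2
    rcases Ne.lt_or_gt hne2 with hl | hl
    · have h2 := hstrict s t hl
      rw [hstq] at h2
      exact absurd h2 (lt_irrefl _)
    · have h2 := hstrict t s hl
      rw [hstq] at h2
      exact absurd h2 (lt_irrefl _)
  set q : Fin w.length → ℕ := fun j => (hsurjp j).choose with hqdef
  have hqlt : ∀ j, q j < w.length := fun j => (hsurjp j).choose_spec.1
  have hpq : ∀ j, p (q j) = j := fun j => (hsurjp j).choose_spec.2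
  set L : List (List α) := (List.finRange w.length).map (fun j => v.rotate (q j)) with hLdef
  have hLsorted : L.Pairwise (· ≤ ·) := by
    rw [hLdef, List.pairwise_map]
    apply List.Pairwise.imp ?_ (List.pairwise_lt_finRange w.length)
    intro a b hab
    exact le_of_lt (hstrict (q a) (q b) (by rw [hpq, hpq]; exact hab))
  have hLnodup : L.Nodup := by
    rw [hLdef]
    apply List.Nodup.map_on ?_ (List.nodup_finRange w.length)
    intro a _ b _ hab
    have h2 := hρinj _ _ hab
    rw [hpq, hpq] at h2
    exact h2
  have hRnodup : (rotations v).Nodup := by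
    rw [rotations]
    apply List.Nodup.map_on ?_ List.nodup_range
    intro a ha b hb hab
    rw [List.mem_range, hvlen] at ha hb
    exact hinj a b ha hb (hρinj _ _ hab)
  have hLperm : List.Perm L (rotations v) := by
    rw [List.perm_ext_iff_of_nodup hLnodup hRnodup]
    intro x
    constructor
    · intro hx
      rw [hLdef, List.mem_map] at hx
      obtain ⟨j, -, rfl⟩ := hx
      exact rotate_mem_rotations v hvne (q j)
    · intro hx
      rw [mem_rotations] at hx
      obtain ⟨k, hk, rfl⟩ := hx
      rw [hLdef, List.mem_map]
      refine ⟨p k, List.mem_finRange _, ?_⟩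
      have h2 : q (p k) = k := by
        apply hinj _ _ (hqlt _) (by rw [hvlen] at hk; exact hk)
        rw [hpq]
      rw [h2]
  have hsorted_eq : (rotations v).insertionSort (· ≤ ·) = L :=
    List.Perm.eq_of_pairwise' (List.pairwise_insertionSort _ _) hLsorted
      ((List.perm_insertionSort _ _).trans hLperm.symm)
  refine ⟨v, hprim, ?_⟩
  show ((rotations v).insertionSort (· ≤ ·)).filterMap List.getLast? = w
  rw [hsorted_eq, hLdef, List.filterMap_map]
  have hfg : (List.getLast? ∘ fun j : Fin w.length => v.rotate (q j)) =
      some ∘ (fun j : Fin w.length => w.get j) := by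
    funext j
    show (v.rotate (q j)).getLast? = _
    rw [List.getLast?_eq_getLast (hρne _), hlast (q j), hpq]
    rfl
  rw [hfg, List.filterMap_eq_map]
  exact List.map_get_finRange w

theorem forward_dir (v : List α) (hprim : Primitive v) (w : List α) (hw : bwt v = w)
    (σ : Equiv.Perm (Fin w.length)) (hσ : IsStdPerm w σ) : PermCyclic σ := by
  classical
  have hvne : v ≠ [] := by
    rintro rfl
    have := hprim [] 0 (by simp)
    omega
  have hv0 : 0 < v.length := List.length_pos_iff.mpr hvne
  simp only [bwt] at hw
  set M : List (List α) := (rotations v).insertionSort (· ≤ ·) with hMdef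
  have hperm : List.Perm M (rotations v) := List.perm_insertionSort _ _
  have hsorted : M.Pairwise (· ≤ ·) := List.pairwise_insertionSort _ _
  have hMlen : M.length = v.length := by rw [hperm.length_eq, length_rotations]
  have hmemM : ∀ x ∈ M, ∃ k, k < v.length ∧ x = v.rotate k := by
    intro x hx
    rw [hperm.mem_iff, mem_rotations] at hx
    exact hx
  have hne : ∀ x ∈ M, x ≠ [] := by
    intro x hx h0
    obtain ⟨k, hk, hke⟩ := hmemM x hx
    have h2 : (v.rotate k).length = 0 := by rw [← hke, h0]; rfl
    rw [List.length_rotate] at h2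
    omega
  obtain ⟨hlen2, hget⟩ := filterMap_getLast?_spec M w hne hw
  have hwlen : w.length = v.length := by omega
  have hwpos : 0 < w.length := by omega
  have hMl : ∀ i : Fin w.length, (i : ℕ) < M.length := fun i => by
    rw [hlen2]; exact i.isLt
  have hrowlen : ∀ (i : ℕ) (h : i < M.length), (M[i]).length = v.length := by
    intro i h
    obtain ⟨k, hk, hke⟩ := hmemM M[i] (List.getElem_mem h)
    rw [hke, List.length_rotate]
  have hrowne : ∀ (i : ℕ) (h : i < M.length), M[i] ≠ [] :=
    fun i h => hne _ (List.getElem_mem h)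
  have hlastw : ∀ (i : ℕ) (h1 : i < M.length) (h2 : i < w.length),
      (M[i]).getLast (hrowne i h1) = w[i] := by
    intro i h1 h2
    have h3 := hget i h1 h2
    rw [List.getLast?_eq_getLast (hrowne i h1)] at h3
    exact Option.some.inj h3
  have hrotinj : ∀ a b, a < v.length → b < v.length → v.rotate a = v.rotate b → a = b := by
    intro a b ha hb hab
    by_contra hne2
    have key : ∀ x y, x < y → y < v.length → v.rotate x = v.rotate y → False := by
      intro x y hxy hy hxye
      have h2 : (v.rotate x).rotate (v.length - y) = (v.rotate y).rotate (v.length - y) := by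
        rw [hxye]
      rw [List.rotate_rotate, List.rotate_rotate,
        show y + (v.length - y) = v.length by omega, List.rotate_length] at h2
      exact not_primitive_of_rotate v (x + (v.length - y)) (by omega) (by omega) h2 hprim
    rcases Nat.lt_or_ge a b with h2 | h2
    · exact key a b h2 hb hab
    · exact key b a (by omega) ha hab.symm
  have hRnodup : (rotations v).Nodup := by
    rw [rotations]
    apply List.Nodup.map_on ?_ List.nodup_range
    intro a ha b hb hab
    rw [List.mem_range] at ha hb
    exact hrotinj a b ha hb hab
  have hMnodup : M.Nodup := hperm.nodup_iff.mpr hRnodup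
  have hgetinj : ∀ (i j : ℕ) (hi : i < M.length) (hj : j < M.length), M[i] = M[j] → i = j := by
    intro i j hi hj hij
    have h2 : M.get ⟨i, hi⟩ = M.get ⟨j, hj⟩ := by
      rw [List.get_eq_getElem, List.get_eq_getElem]
      exact hij
    have h3 := List.nodup_iff_injective_get.mp hMnodup h2
    exact congrArg Fin.val h3
  have hstrictM : ∀ (i j : ℕ) (hi : i < M.length) (hj : j < M.length), i < j → M[i] < M[j] := by
    intro i j hi hj hij
    have hle : M[i] ≤ M[j] := by
      have h2 := List.Pairwise.rel_get_of_lt hsorted (a := ⟨i, hi⟩) (b := ⟨j, hj⟩)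
        (Fin.mk_lt_mk.mpr hij)
      rw [List.get_eq_getElem, List.get_eq_getElem] at h2
      exact h2
    rcases lt_or_eq_of_le hle with h2 | h2
    · exact h2
    · exact absurd (hgetinj i j hi hj h2) (by omega)
  have hiffM : ∀ (i j : ℕ) (hi : i < M.length) (hj : j < M.length),
      (i < j ↔ M[i] < M[j]) := by
    intro i j hi hj
    constructor
    · exact hstrictM i j hi hj
    · intro h2
      by_contra h3
      rcases Nat.lt_or_ge j i with h4 | h4
      · exact lt_asymm h2 (hstrictM j i hj hi h4)
      · have h5 : i = j := by omega
        subst h5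
        exact lt_irrefl _ h2
  have hrotmem : ∀ (i : ℕ) (h : i < M.length), (M[i]).rotate ((M[i]).length - 1) ∈ M := by
    intro i h
    obtain ⟨k, hk, hke⟩ := hmemM M[i] (List.getElem_mem h)
    rw [hke, List.rotate_rotate, hperm.mem_iff]
    exact rotate_mem_rotations v hvne _
  have hex : ∀ i : Fin w.length, ∃ j : Fin w.length, M[(j : ℕ)]'(hMl j) =
      (M[(i : ℕ)]'(hMl i)).rotate ((M[(i : ℕ)]'(hMl i)).length - 1) := by
    intro i
    obtain ⟨n, hn, he⟩ := List.getElem_of_mem (hrotmem _ (hMl i))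
    exact ⟨⟨n, by omega⟩, he⟩
  choose f hfval using hex
  have hfcons : ∀ i : Fin w.length, M[(f i : ℕ)]'(hMl (f i)) =
      w[(i : ℕ)] :: (M[(i : ℕ)]'(hMl i)).dropLast := by
    intro i
    rw [hfval i, rotr_eq _ (hrowne _ (hMl i)), hlastw _ (hMl i) i.isLt]
  have hfinj : Function.Injective f := by
    intro i j hij
    have h2 : (M[(i : ℕ)]'(hMl i)).rotate ((M[(i : ℕ)]'(hMl i)).length - 1) =
        (M[(j : ℕ)]'(hMl j)).rotate ((M[(j : ℕ)]'(hMl j)).length - 1) := by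
      rw [← hfval i, ← hfval j]
      congr 1
      exact congrArg Fin.val hij
    have h3 := congrArg (fun l : List α => l.rotate 1) h2
    simp only [List.rotate_rotate] at h3
    rw [show (M[(i : ℕ)]'(hMl i)).length - 1 + 1 = (M[(i : ℕ)]'(hMl i)).length by
        rw [hrowlen _ (hMl i)]; omega,
      show (M[(j : ℕ)]'(hMl j)).length - 1 + 1 = (M[(j : ℕ)]'(hMl j)).length by
        rw [hrowlen _ (hMl j)]; omega,
      List.rotate_length, List.rotate_length] at h3
    exact Fin.ext (hgetinj _ _ (hMl i) (hMl j) h3)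
  set fperm : Equiv.Perm (Fin w.length) :=
    Equiv.ofBijective f (Finite.injective_iff_bijective.mp hfinj) with hfpdef
  have hfp : ∀ i, fperm i = f i := fun i => rfl
  have hdec : ∀ (i j : Fin w.length), w[(i : ℕ)] = w[(j : ℕ)] →
      ((M[(i : ℕ)]'(hMl i)).dropLast < (M[(j : ℕ)]'(hMl j)).dropLast ↔ (i : ℕ) < (j : ℕ)) := by
    intro i j hwij
    rw [hiffM _ _ (hMl i) (hMl j)]
    conv_rhs => rw [← List.dropLast_append_getLast (hrowne _ (hMl i)),
      ← List.dropLast_append_getLast (hrowne _ (hMl j))]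
    rw [hlastw _ (hMl i) i.isLt, hlastw _ (hMl j) j.isLt, ← hwij]
    rw [append_lt_append_iff _ _ _
      (by rw [List.length_dropLast, List.length_dropLast, hrowlen _ (hMl i), hrowlen _ (hMl j)])]
  have hiff2 : ∀ i j : Fin w.length, (f i < f j) ↔
      (w[(i : ℕ)] < w[(j : ℕ)] ∨ (w[(i : ℕ)] = w[(j : ℕ)] ∧ i < j)) := by
    intro i j
    rw [Fin.lt_def, hiffM _ _ (hMl (f i)) (hMl (f j)), hfcons i, hfcons j, cons_lt_cons_iff']
    constructor
    · rintro (h2 | ⟨h2, h3⟩)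
      · exact Or.inl h2
      · exact Or.inr ⟨h2, Fin.lt_def.mpr ((hdec i j h2).mp h3)⟩
    · rintro (h2 | ⟨h2, h3⟩)
      · exact Or.inl h2
      · exact Or.inr ⟨h2, (hdec i j h2).mpr (Fin.lt_def.mp h3)⟩
  have hstdf : IsStdPerm w fperm := by
    refine ⟨rfl, ?_⟩
    intro i j
    exact hiff2 i j
  have hσf : σ = fperm := isStdPerm_unique w σ fperm hσ hstdf
  rw [hσf]
  refine ⟨⟨⟨0, hwpos⟩, trivial⟩, ?_, ?_⟩
  · rw [Set.image_univ]
    exact Equiv.range_eq_univ fperm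
  · intro D hDne hDsub hDinv
    obtain ⟨i, hi⟩ := hDne
    have hclosed : ∀ x ∈ D, fperm x ∈ D := by
      intro x hx
      rw [← hDinv]
      exact Set.mem_image_of_mem _ hx
    have hiter : ∀ k : ℕ, (fperm ^ k) i ∈ D := by
      intro k
      induction k with
      | zero => exact hi
      | succ k ih =>
        rw [pow_succ', Equiv.Perm.mul_apply]
        exact hclosed _ ih
    have hpow : ∀ k : ℕ, M[((fperm ^ k) i : ℕ)]'(hMl _) =
        (M[(i : ℕ)]'(hMl i)).rotate (k * (v.length - 1)) := by
      intro k
      induction k with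
      | zero =>
        show M[((1 : Equiv.Perm (Fin w.length)) i : ℕ)]'(hMl _) = _
        rw [Equiv.Perm.one_apply, Nat.zero_mul, List.rotate_zero]
      | succ k ih =>
        have h1 : (fperm ^ (k + 1)) i = f ((fperm ^ k) i) := by
          rw [pow_succ', Equiv.Perm.mul_apply]
          rfl
        rw [h1, hfval ((fperm ^ k) i), ih, List.rotate_rotate, List.length_rotate,
          hrowlen _ (hMl i), Nat.succ_mul]
    rw [Set.eq_univ_iff_forall]
    intro j
    obtain ⟨a, ha, hMi⟩ := hmemM (M[(i : ℕ)]'(hMl i)) (List.getElem_mem (hMl i))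
    obtain ⟨b, hb, hMj⟩ := hmemM (M[(j : ℕ)]'(hMl j)) (List.getElem_mem (hMl j))
    set k := a + v.length - b with hkdef
    have hk1 : 1 ≤ k := by omega
    have g1 : k * v.length = k * (v.length - 1) + k := by
      have h9 : v.length - 1 + 1 = v.length := by omega
      calc k * v.length = k * ((v.length - 1) + 1) := by rw [h9]
        _ = k * (v.length - 1) + k := by ring
    have g2 : k * v.length = (k - 1) * v.length + v.length := by
      have h9 : k - 1 + 1 = k := by omega
      calc k * v.length = ((k - 1) + 1) * v.length := by rw [h9]
        _ = (k - 1) * v.length + v.length := by ring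
    have e1 : a + k * (v.length - 1) + k = b + k + (k - 1) * v.length := by omega
    have e2 : (a + k * (v.length - 1) + k) % v.length = (b + k) % v.length := by
      rw [e1]
      exact Nat.add_mul_mod_self_right _ _ _
    have e3 : (a + k * (v.length - 1)) % v.length = b % v.length :=
      Nat.ModEq.add_right_cancel' k e2
    have hMk : M[((fperm ^ k) i : ℕ)]'(hMl _) = M[(j : ℕ)]'(hMl j) := by
      rw [hpow k, hMi, hMj, List.rotate_rotate, ← List.rotate_mod v (a + k * (v.length - 1)),
        e3, List.rotate_mod]
    have hkj : (fperm ^ k) i = j := Fin.ext (hgetinj _ _ (hMl _) (hMl j) hMk)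
    rw [← hkj]
    exact hiter k

end Aux

/-- A word `w` over a finite ordered alphabet is the Burrows–Wheeler
transform of a primitive word if and only if its standard permutation `σ_w` is cyclic. -/
theorem statement_0 {α : Type*} [LinearOrder α] [Fintype α] (w : List α)
    (σ : Equiv.Perm (Fin w.length)) (hσ : IsStdPerm w σ) :
    (∃ v : List α, Primitive v ∧ bwt v = w) ↔ PermCyclic σ := by
  constructor
  · rintro ⟨v, hp, hb⟩
    exact forward_dir v hp w hb σ hσ
  · intro hc
    exact reverse_dir w σ hσ hc

end DollarBWT
end

section
/- Let w be a word of length n over a finite ordered alphabet Σ and let 1 ≤ i ≤ n. Then: (1) σ_1(1) = 1 and σ_1(j) = σ_w(j−1) + 1 for all 1 < j ≤ n+1; and (2) σ_{i+1} = (1, σ_i(i+1)) ∘ σ_i, i.e. the standard permutation σ_{i+1} is obtained from σ_i by composing with the single transposition exchanging 1 and σ_i(i+1). -/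
namespace DollarBWT

section Aux

variable {α : Type*} [LinearOrder α]

/-- Uniqueness of the standard permutation. -/
lemma stdPerm_unique {n : ℕ} {v : List α}
    {σ τ : Equiv.Perm (Fin n)} (hσ : IsStdPerm v σ) (hτ : IsStdPerm v τ) : σ = τ := by
  obtain ⟨h, hσ'⟩ := hσ
  obtain ⟨h', hτ'⟩ := hτ
  have key : ∀ i j : Fin n, σ i < σ j ↔ τ i < τ j := by
    intro i j
    rw [hσ' i j, hτ' i j]
  have hmono : StrictMono (fun x => σ (τ.symm x)) := by
    intro x y hxy
    exact (key (τ.symm x) (τ.symm y)).2 (by simpa using hxy)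
  have hsurj : Function.Surjective (fun x => σ (τ.symm x)) :=
    fun y => ⟨τ (σ.symm y), by simp⟩
  let e : Fin n ≃o Fin n := StrictMono.orderIsoOfSurjective _ hmono hsurj
  apply Equiv.ext
  intro a
  have := Fin.coe_orderIso_apply e (τ a)
  have he : e (τ a) = σ a := by
    show σ (τ.symm (τ a)) = σ a
    simp
  rw [he] at this
  exact Fin.val_injective this

lemma dol_eq (w : List α) (i : ℕ) :
    dol w i = (w.map WithBot.some).insertIdx (i - 1) ⊥ := by
  show ((w.map (fun a => (a : WithBot α))).insertIdx (i - 1) ⊥) = _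
  congr 1
  induction w with
  | nil => rfl
  | cons a l ih => simpa using ih

lemma dol_length (w : List α) {i : ℕ} (hi : i ≤ w.length + 1) :
    (dol w i).length = w.length + 1 := by
  rw [dol_eq, List.length_insertIdx_of_le_length (by rw [List.length_map]; omega), List.length_map]

lemma dol_getElem_lt (w : List α) {i k : ℕ} (hk : k < i - 1) (hkw : k < w.length)
    (hk' : k < (dol w i).length) :
    (dol w i)[k] = (w[k] : WithBot α) := by
  rw [dol_eq] at hk'
  rw [List.getElem_of_eq (dol_eq w i), List.getElem_insertIdx_of_lt hk hk']
  simp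

lemma dol_getElem_self (w : List α) {i : ℕ} (h2 : i ≤ w.length + 1)
    (hk' : i - 1 < (dol w i).length) :
    (dol w i)[i - 1] = ⊥ := by
  rw [dol_eq] at hk'
  rw [List.getElem_of_eq (dol_eq w i), List.getElem_insertIdx_self hk']

lemma dol_getElem_ge (w : List α) {i k : ℕ} (h1 : 1 ≤ i) (hk : i ≤ k) (hkw : k ≤ w.length)
    (hk' : k < (dol w i).length) :
    (dol w i)[k] = (w[k - 1]'(by omega) : WithBot α) := by
  rw [dol_eq] at hk'
  rw [List.getElem_of_eq (dol_eq w i)]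
  have h3 : (i - 1) + (k - i) + 1 = k := by omega
  have h4 : (i - 1) + (k - i) = k - 1 := by omega
  have hb : (i - 1) + (k - i) < (w.map WithBot.some).length := by
    rw [List.length_map]; omega
  have := List.getElem_insertIdx_add_succ (w.map WithBot.some) ⊥
    (i - 1) (k - i) hb (by rw [h3]; exact hk')
  rw [List.getElem_map] at this
  simp only [h3, h4] at this
  have h5 : k - 1 + 1 = k := by omega
  simp only [h5] at this
  exact this

end Aux

lemma aux_part2 {α : Type*} [LinearOrder α] (w : List α) (i : ℕ)
    (h1 : 1 ≤ i) (h2 : i ≤ w.length)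
    (σi : Equiv.Perm (Fin (w.length + 1))) (hσi : IsStdPerm (dol w i) σi)
    (σi1 : Equiv.Perm (Fin (w.length + 1))) (hσi1 : IsStdPerm (dol w (i + 1)) σi1) :
    σi1 = Equiv.swap (⟨0, Nat.lt_succ_of_le (Nat.zero_le _)⟩ : Fin (w.length + 1))
      (σi ⟨i, Nat.lt_succ_of_le h2⟩) * σi := by
  obtain ⟨hdi, hsi⟩ := hσi
  simp only [List.get_eq_getElem, Fin.coe_cast] at hsi
  have hp : i - 1 < w.length + 1 := by omega
  have hq : i < w.length + 1 := by omega
  set p : Fin (w.length + 1) := ⟨i - 1, hp⟩ with hpdef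
  set q : Fin (w.length + 1) := ⟨i, hq⟩ with hqdef
  have hlen1 : (dol w (i + 1)).length = w.length + 1 := dol_length w (by omega)
  have hub : ∀ a : Fin (w.length + 1), a ≠ p →
      ⊥ < (dol w i)[(a : ℕ)]'(by rw [hdi]; exact a.isLt) := by
    intro a hap
    have hav : (a : ℕ) ≠ i - 1 := fun h => hap (Fin.ext h)
    rcases lt_or_ge (a : ℕ) (i - 1) with h | h
    · rw [dol_getElem_lt w h (by omega)]
      exact WithBot.bot_lt_coe _
    · rw [dol_getElem_ge w h1 (by omega) (by omega)]
      exact WithBot.bot_lt_coe _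
  have hbotp : (dol w i)[(p : ℕ)]'(by rw [hdi]; exact p.isLt) = ⊥ :=
    dol_getElem_self w (by omega) (by rw [hdi]; exact p.isLt)
  have hp0 : σi p = 0 := by
    by_contra hne
    have hcp : σi.symm 0 ≠ p := by
      intro h
      apply hne
      rw [← h]
      simp
    have hlt := (hsi p (σi.symm 0)).2 (Or.inl (by rw [hbotp]; exact hub _ hcp))
    rw [Equiv.apply_symm_apply] at hlt
    exact absurd hlt (Fin.not_lt_zero _)
  have hpq : p ≠ q := by
    simp only [hpdef, hqdef, Ne, Fin.mk.injEq]
    omega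
  have hfun : ∀ x, (Equiv.swap (0 : Fin (w.length + 1)) (σi q) * σi) x
      = σi (Equiv.swap p q x) := by
    intro x
    rcases eq_or_ne x p with rfl | hxp
    · rw [Equiv.swap_apply_left, Equiv.Perm.mul_apply, hp0, Equiv.swap_apply_left]
    rcases eq_or_ne x q with rfl | hxq
    · rw [Equiv.swap_apply_right, Equiv.Perm.mul_apply, Equiv.swap_apply_right, hp0]
    · rw [Equiv.swap_apply_of_ne_of_ne hxp hxq, Equiv.Perm.mul_apply,
        Equiv.swap_apply_of_ne_of_ne
          (fun h => hxp (σi.injective (h.trans hp0.symm)))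
          (fun h => hxq (σi.injective h))]
  have hentry : ∀ a : Fin (w.length + 1),
      (dol w (i + 1))[(a : ℕ)]'(by rw [hlen1]; exact a.isLt)
        = (dol w i)[((Equiv.swap p q a : Fin (w.length + 1)) : ℕ)]'(by
            rw [hdi]; exact (Equiv.swap p q a).isLt) := by
    intro a
    rcases eq_or_ne a p with rfl | hap
    · rw [Equiv.swap_apply_left]
      rw [dol_getElem_lt w (show ((p : Fin (w.length+1)) : ℕ) < (i+1) - 1 by
            simp only [hpdef]; omega) (by simp only [hpdef]; omega),
        dol_getElem_ge w h1 (le_refl i) h2]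
    rcases eq_or_ne a q with rfl | haq
    · rw [Equiv.swap_apply_right]
      have e1 : ((q : Fin (w.length + 1)) : ℕ) = i := rfl
      have e2 : ((p : Fin (w.length + 1)) : ℕ) = i - 1 := rfl
      simp only [e1, e2]
      have t1 := dol_getElem_self w (i := i + 1) (by omega) (by rw [hlen1]; omega)
      have t2 := dol_getElem_self w (i := i) (by omega) (by rw [hdi]; omega)
      simp only [Nat.add_sub_cancel] at t1
      rw [t1, t2]
    · rw [Equiv.swap_apply_of_ne_of_ne hap haq]
      have hav1 : (a : ℕ) ≠ i - 1 := fun h => hap (Fin.ext h)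
      have hav2 : (a : ℕ) ≠ i := fun h => haq (Fin.ext h)
      rcases lt_or_ge (a : ℕ) (i - 1) with h | h
      · rw [dol_getElem_lt w (by omega) (by omega),
          dol_getElem_lt w (by omega) (by omega)]
      · have h5 : i + 1 ≤ (a : ℕ) := by omega
        rw [dol_getElem_ge w (by omega) h5 (by omega),
          dol_getElem_ge w h1 (by omega) (by omega)]
  have vp : ((p : Fin (w.length + 1)) : ℕ) = i - 1 := rfl
  have vq : ((q : Fin (w.length + 1)) : ℕ) = i := rfl
  have hkey : ∀ a b : Fin (w.length + 1),
      (dol w i)[((Equiv.swap p q a : Fin (w.length + 1)) : ℕ)]'(by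
          rw [hdi]; exact (Equiv.swap p q a).isLt)
        = (dol w i)[((Equiv.swap p q b : Fin (w.length + 1)) : ℕ)]'(by
          rw [hdi]; exact (Equiv.swap p q b).isLt) →
      (Equiv.swap p q a < Equiv.swap p q b ↔ a < b) := by
    intro a b heq
    rcases eq_or_ne a b with rfl | hab
    · simp
    rcases eq_or_ne a q with rfl | haq
    · exfalso
      rw [Equiv.swap_apply_right] at heq
      have hbp : Equiv.swap p q b ≠ p := by
        intro h
        exact hab ((Equiv.swap p q).injective
          ((Equiv.swap_apply_right p q).trans h.symm))
      have := hub _ hbp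
      rw [← heq, hbotp] at this
      exact lt_irrefl _ this
    rcases eq_or_ne b q with rfl | hbq
    · exfalso
      rw [Equiv.swap_apply_right] at heq
      have hap' : Equiv.swap p q a ≠ p := by
        intro h
        exact haq ((Equiv.swap p q).injective (h.trans (Equiv.swap_apply_right p q).symm))
      have := hub _ hap'
      rw [heq, hbotp] at this
      exact lt_irrefl _ this
    rcases eq_or_ne a p with rfl | hap
    · have hbp : b ≠ p := Ne.symm hab
      rw [Equiv.swap_apply_left, Equiv.swap_apply_of_ne_of_ne hbp hbq]
      have hb1 : (b : ℕ) ≠ i - 1 := fun h => hbp (Fin.ext h)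
      have hb2 : (b : ℕ) ≠ i := fun h => hbq (Fin.ext h)
      rw [Fin.lt_def, Fin.lt_def, vp, vq]
      omega
    rcases eq_or_ne b p with rfl | hbp
    · rw [Equiv.swap_apply_of_ne_of_ne hap haq, Equiv.swap_apply_left]
      have ha1 : (a : ℕ) ≠ i - 1 := fun h => hap (Fin.ext h)
      have ha2 : (a : ℕ) ≠ i := fun h => haq (Fin.ext h)
      rw [Fin.lt_def, Fin.lt_def, vp, vq]
      omega
    · rw [Equiv.swap_apply_of_ne_of_ne hap haq, Equiv.swap_apply_of_ne_of_ne hbp hbq]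
  have hτ2 : IsStdPerm (dol w (i + 1)) (Equiv.swap (0 : Fin (w.length + 1)) (σi q) * σi) := by
    refine ⟨hlen1, ?_⟩
    intro a b
    simp only [List.get_eq_getElem, Fin.coe_cast]
    rw [hfun a, hfun b, hsi (Equiv.swap p q a) (Equiv.swap p q b)]
    rw [hentry a, hentry b]
    constructor
    · rintro (h | ⟨h, hlt⟩)
      · exact Or.inl h
      · exact Or.inr ⟨h, (hkey a b h).1 hlt⟩
    · rintro (h | ⟨h, hlt⟩)
      · exact Or.inl h
      · exact Or.inr ⟨h, (hkey a b h).2 hlt⟩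
  have hfin := stdPerm_unique hσi1 hτ2
  have h0 : (⟨0, by omega⟩ : Fin (w.length + 1)) = 0 := by
    apply Fin.ext
    simp
  rw [h0]
  exact hfin

/-- (1) `σ_1(1) = 1` and `σ_1(j) = σ_w(j−1) + 1` for `1 < j ≤ n+1`;
(2) `σ_{i+1} = (1, σ_i(i+1)) ∘ σ_i` for `1 ≤ i ≤ n`, i.e. `σ_{i+1}` is obtained from
`σ_i` by composing with the transposition exchanging `1` and `σ_i(i+1)`. -/
theorem statement_4 {α : Type*} [LinearOrder α] [Fintype α] (w : List α) (i : ℕ)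
    (h1 : 1 ≤ i) (h2 : i ≤ w.length)
    (σ : Equiv.Perm (Fin w.length)) (hσ : IsStdPerm w σ)
    (σ1 : Equiv.Perm (Fin (w.length + 1))) (hσ1 : IsStdPerm (dol w 1) σ1)
    (σi : Equiv.Perm (Fin (w.length + 1))) (hσi : IsStdPerm (dol w i) σi)
    (σi1 : Equiv.Perm (Fin (w.length + 1))) (hσi1 : IsStdPerm (dol w (i + 1)) σi1) :
    (ap σ1 1 = 1 ∧ ∀ j : ℕ, 1 < j → j ≤ w.length + 1 → ap σ1 j = ap σ (j - 1) + 1) ∧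
    σi1 = Equiv.swap (⟨0, by omega⟩ : Fin (w.length + 1)) (σi ⟨i, by omega⟩) * σi := by
  constructor
  · -- Part 1
    obtain ⟨hw, hσ'⟩ := hσ
    simp only [List.get_eq_getElem, Fin.coe_cast] at hσ'
    set τ : Equiv.Perm (Fin (w.length + 1)) := Equiv.Perm.decomposeFin.symm (0, σ) with hτdef
    have hd1 : dol w 1 = ⊥ :: w.map WithBot.some := by
      rw [dol_eq]
      rfl
    have hτ : IsStdPerm (dol w 1) τ := by
      refine ⟨by rw [hd1]; simp, ?_⟩
      intro a b
      simp only [List.get_eq_getElem, Fin.coe_cast]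
      rw [List.getElem_of_eq hd1, List.getElem_of_eq hd1]
      cases a using Fin.cases with
      | zero =>
        cases b using Fin.cases with
        | zero => simp [hτdef]
        | succ j =>
          simp only [hτdef, Equiv.Perm.decomposeFin_symm_apply_zero,
            Equiv.Perm.decomposeFin_symm_apply_succ, Equiv.swap_self, Equiv.refl_apply,
            Fin.val_zero, Fin.val_succ, List.getElem_cons_zero, List.getElem_cons_succ,
            List.getElem_map]
          simp [Fin.succ_pos, WithBot.bot_lt_coe]
      | succ j =>
        cases b using Fin.cases with
        | zero =>
          simp only [hτdef, Equiv.Perm.decomposeFin_symm_apply_zero,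
            Equiv.Perm.decomposeFin_symm_apply_succ, Equiv.swap_self, Equiv.refl_apply,
            Fin.val_zero, Fin.val_succ, List.getElem_cons_zero, List.getElem_cons_succ,
            List.getElem_map]
          simp [Fin.not_lt_zero]
        | succ k =>
          simp only [hτdef, Equiv.Perm.decomposeFin_symm_apply_succ, Equiv.swap_self,
            Equiv.refl_apply, Fin.val_succ, List.getElem_cons_succ, List.getElem_map]
          rw [Fin.succ_lt_succ_iff, Fin.succ_lt_succ_iff, WithBot.coe_lt_coe, WithBot.coe_inj]
          exact hσ' j k
    have στ : σ1 = τ := stdPerm_unique hσ1 hτ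
    constructor
    · rw [στ]
      unfold ap
      rw [dif_pos ⟨le_refl 1, by omega⟩]
      have h0 : (⟨1 - 1, by omega⟩ : Fin (w.length + 1)) = 0 := by
        apply Fin.ext; simp
      rw [h0, hτdef, Equiv.Perm.decomposeFin_symm_apply_zero]
      simp
    · intro j hj1 hj2
      rw [στ]
      unfold ap
      rw [dif_pos ⟨by omega, hj2⟩, dif_pos ⟨by omega, by omega⟩]
      have hsucc : (⟨j - 1, by omega⟩ : Fin (w.length + 1))
          = Fin.succ ⟨j - 1 - 1, by omega⟩ := by
        apply Fin.ext
        simp [Fin.val_succ]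
        omega
      rw [hsucc, hτdef, Equiv.Perm.decomposeFin_symm_apply_succ]
      simp [Equiv.swap_self]
  · -- Part 2
    exact aux_part2 w i h1 h2 σi hσi σi1 hσi1

end DollarBWT
end

section
/- Let v be a word over a finite ordered alphabet Σ and let w = BWT(v$). If the second character of w is $ (i.e. w_2 = $), then v is a Lyndon word. -/
namespace DollarBWT

/-- auxiliary -/
lemma filterMap_getLast?_eq {β : Type*} (d : β) :
    ∀ (l : List (List β)), (∀ x ∈ l, x ≠ []) →
      l.filterMap List.getLast? = l.map (fun x => x.getLastD d)
  | [], _ => rfl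
  | x :: l, h => by
    have hx : x ≠ [] := h x (by simp)
    obtain ⟨c, hc⟩ := Option.isSome_iff_exists.mp (List.getLast?_isSome.mpr hx)
    rw [List.filterMap_cons, List.map_cons, hc, filterMap_getLast?_eq d l
      (fun y hy => h y (by simp [hy])), List.getLastD_eq_getLast?, hc]
    rfl

/-- auxiliary -/
lemma key {β : Type*} [LinearOrder β] :
    ∀ (t x : List β), t.length = x.length → ∀ (z w : List β) (c : β),
      (∀ e ∈ z, c < e) → z ≠ [] →
      List.Lex (· < ·) (t ++ (z ++ [c])) (x ++ (c :: w)) →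
      ∀ p q : List β, List.Lex (· < ·) (t ++ p) (x ++ q)
  | [], [], _, z, w, c, hz, hzne, h, p, q => by
    obtain ⟨e, z', rfl⟩ := List.exists_cons_of_ne_nil hzne
    simp only [List.nil_append, List.cons_append] at h
    cases h with
    | rel h' => exact absurd h' (not_lt_of_gt (hz e (by simp)))
    | cons h' => exact absurd (hz c (by simp)) (lt_irrefl c)
  | a :: t, b :: x, hlen, z, w, c, hz, hzne, h, p, q => by
    simp only [List.cons_append] at h ⊢
    cases h with
    | rel h' => exact List.Lex.rel h'
    | cons h' =>
      exact List.Lex.cons (key t x (by simpa using hlen) z w c hz hzne h' p q)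

/-- auxiliary -/
lemma lt_iff_lex {β : Type*} [LinearOrder β] (l l' : List β) :
    l < l' ↔ List.Lex (· < ·) l l' := Iff.rfl

/-- auxiliary -/
lemma coe_lex {α : Type*} [LinearOrder α] (l₁ l₂ : List α)
    (h : List.Lex (· < ·) (List.map (fun a => WithBot.some a) l₁)
      (List.map (fun a => WithBot.some a) l₂)) :
    List.Lex (· < ·) l₁ l₂ := by
  induction l₁ generalizing l₂ with
  | nil =>
    cases l₂ with
    | nil => simp only [List.map_nil] at h; cases h
    | cons b l₂ => exact List.Lex.nil
  | cons a l₁ ih =>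
    cases l₂ with
    | nil => simp only [List.map_cons, List.map_nil] at h; cases h
    | cons b l₂ =>
      simp only [List.map_cons] at h
      cases h with
      | rel h' => exact List.Lex.rel (WithBot.coe_lt_coe.mp h')
      | cons h' => exact List.Lex.cons (ih l₂ h')

/-- auxiliary -/
lemma mapcoe {α : Type*} [LinearOrder α] (l₁ : List α) :
    (l₁.map (fun a => (a : WithBot α))) = List.map (fun a => WithBot.some a) l₁ := by
  simp only [List.pure_def, List.bind_eq_flatMap, List.map_id_fun', id_eq]
  rw [← List.map_eq_flatMap]

/-- If `w = BWT(v$)` and the second character of `w` is `$`,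
then `v` is a Lyndon word (strictly smaller than each of its conjugates distinct
from itself). -/
theorem statement_8 {α : Type*} [LinearOrder α] [Fintype α] (v : List α)
    (h2 : (bwt (v.map (fun a => (a : WithBot α)) ++ [(⊥ : WithBot α)]))[1]? =
      some (⊥ : WithBot α)) :
    ∀ k : ℕ, k < v.length → v.rotate k ≠ v → v < v.rotate k := by

  intro k hk hne
  rw [mapcoe] at h2
  set v' : List (WithBot α) := List.map (fun a => WithBot.some a) v with hv'
  set u : List (WithBot α) := v' ++ [⊥] with hu
  have hv'len : v'.length = v.length := by simp [hv']
  have hulen : u.length = v.length + 1 := by simp [hu, hv'len]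
  have hk1 : 1 ≤ k := by
    rcases Nat.eq_zero_or_pos k with rfl | h
    · exact absurd (List.rotate_zero v) hne
    · exact h
  have hvbot : ∀ e ∈ v', (⊥ : WithBot α) < e := by
    intro e he
    rw [hv', List.mem_map] at he
    obtain ⟨a, -, rfl⟩ := he
    exact WithBot.bot_lt_coe a
  have hugetlow : ∀ j (hj : j < v.length), u[j]'(by omega) = WithBot.some (v[j]'hj) := by
    intro j hj
    have h1 : u[j]'(by omega) = v'[j]'(by omega) :=
      List.getElem_append_left (by omega)
    rw [h1]
    exact List.getElem_map _
  -- the sorted list of rotations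
  set L := (rotations u).insertionSort (· ≤ ·) with hL
  have hperm : List.Perm L (rotations u) := List.perm_insertionSort _ _
  have hsorted : L.Pairwise (· ≤ ·) := List.pairwise_insertionSort _ _
  have hmem : ∀ x ∈ L, ∃ j, j < u.length ∧ x = u.rotate j := by
    intro x hx
    have hx' := hperm.mem_iff.mp hx
    rw [rotations, List.mem_map] at hx'
    obtain ⟨j, hj, rfl⟩ := hx'
    exact ⟨j, List.mem_range.mp hj, rfl⟩
  have hne' : ∀ x ∈ L, x ≠ [] := by
    intro x hx
    obtain ⟨j, hj, rfl⟩ := hmem x hx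
    have hlr : (u.rotate j).length = u.length := List.length_rotate u j
    intro hnil
    rw [hnil] at hlr
    simp [hulen] at hlr
  have hbwt : bwt u = L.map (fun x => x.getLastD ⊥) := by
    rw [bwt, ← hL]
    exact filterMap_getLast?_eq ⊥ L hne'
  rw [hbwt, List.getElem?_map] at h2
  have h1lt : 1 < L.length := by
    by_contra hle
    push_neg at hle
    rw [List.getElem?_eq_none (by omega)] at h2
    simp at h2
  rw [List.getElem?_eq_getElem h1lt] at h2
  simp only [Option.map_some, Option.some.injEq] at h2
  -- identify L[1] = u
  obtain ⟨j, hj, hjq⟩ := hmem (L[1]'h1lt) (List.getElem_mem h1lt)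
  rw [hjq] at h2
  have hj0 : j = 0 := by
    by_contra hj0
    have hjlen : (u.rotate j).length = v.length + 1 := by
      rw [List.length_rotate, hulen]
    have hlt : v.length < (u.rotate j).length := by omega
    have hval : (u.rotate j)[v.length]'hlt = ⊥ := by
      rw [List.getLastD_eq_getLast?, List.getLast?_eq_getElem?, hjlen,
        Nat.add_sub_cancel, List.getElem?_eq_getElem hlt] at h2
      exact h2
    rw [List.getElem_rotate] at hval
    have hmod : (v.length + j) % u.length = j - 1 := by
      rw [hulen, Nat.mod_eq_sub_mod (by omega)]
      have he : v.length + j - (v.length + 1) = j - 1 := by omega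
      rw [he, Nat.mod_eq_of_lt (by omega)]
    have hval? : u[(v.length + j) % u.length]? = some ⊥ := by
      rw [List.getElem?_eq_getElem (by rw [hmod]; omega)]
      exact congrArg some hval
    rw [hmod, List.getElem?_eq_getElem (show j - 1 < u.length by omega),
      hugetlow (j - 1) (by omega)] at hval?
    simp at hval?
  subst hj0
  rw [List.rotate_zero] at hjq
  have hs1 : L[1]'h1lt = u := hjq
  -- indices of rotations in L
  have hmem' : ∀ j, j < u.length → ∃ i : Fin L.length, L.get i = u.rotate j := by
    intro j hj'
    have hmm : u.rotate j ∈ rotations u := by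
      rw [rotations, List.mem_map]
      exact ⟨j, List.mem_range.mpr hj', rfl⟩
    exact List.mem_iff_get.mp (hperm.mem_iff.mpr hmm)
  -- the smallest rotation ⊥ :: v'
  have hr0 : u.rotate v.length = ⊥ :: v' := by
    have hd : u.drop v.length = [⊥] := by rw [hu, ← hv'len, List.drop_left]
    have ht : u.take v.length = v' := by rw [hu, ← hv'len, List.take_left]
    rw [List.rotate_eq_drop_append_take (by omega), hd, ht]
    rfl
  obtain ⟨i0, hi0⟩ := hmem' v.length (by omega)
  obtain ⟨i, hi⟩ := hmem' k (by omega)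
  -- decomposition of u.rotate k
  have hdk : u.drop k = v'.drop k ++ [⊥] := by
    rw [hu, List.drop_append_of_le_length (by omega)]
  have htk : u.take k = v'.take k := by
    rw [hu, List.take_append_of_le_length (by omega)]
  have hrkeq : u.rotate k = (v'.drop k ++ [⊥]) ++ v'.take k := by
    rw [List.rotate_eq_drop_append_take (by omega : k ≤ u.length), hdk, htk]
  have hdkne : v'.drop k ≠ [] := by
    rw [← List.length_pos_iff]
    simp [hv'len]
    omega
  obtain ⟨a, rest, hdrop⟩ := List.exists_cons_of_ne_nil hdkne
  have ha : (⊥ : WithBot α) < a :=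
    hvbot a (List.drop_subset k v' (hdrop ▸ List.mem_cons_self (a := a) (l := rest)))
  have hrkcons : u.rotate k = a :: (rest ++ [⊥] ++ v'.take k) := by
    rw [hrkeq, hdrop]
    simp
  -- r0 < rk
  have hr0_lt_rk : u.rotate v.length < u.rotate k := by
    rw [hr0, hrkcons]
    exact (lt_iff_lex _ _).mpr (List.Lex.rel ha)
  -- rk ≠ u
  have htkne : v'.take k ≠ [] := by
    rw [← List.length_pos_iff]
    simp [hv'len]
    omega
  have hrk_ne_u : u.rotate k ≠ u := by
    intro heq
    have hg1 : (u.rotate k).getLast? = u.getLast? := by rw [heq]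
    have hg2 : u.getLast? = some ⊥ := by rw [hu, List.getLast?_concat]
    have hg3 : (u.rotate k).getLast? = some ((v'.take k).getLast htkne) := by
      rw [hrkeq, List.getLast?_append_of_ne_nil _ htkne, List.getLast?_eq_getLast htkne]
    rw [hg3, hg2] at hg1
    have hmm : (v'.take k).getLast htkne ∈ v' :=
      List.take_subset k v' (List.getLast_mem htkne)
    have := hvbot _ hmm
    have hb := Option.some_injective _ hg1
    rw [hb] at this
    exact lt_irrefl _ this
  -- u < u.rotate k
  have hu_lt_rk : u < u.rotate k := by
    rcases lt_trichotomy (i : ℕ) 1 with h1' | h1' | h1'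
    · -- i = 0 : contradiction
      exfalso
      have hii0 : i < i0 := by
        rcases lt_trichotomy i i0 with h | h | h
        · exact h
        · exfalso
          rw [h, hi0] at hi
          rw [hi, hrkcons] at hr0_lt_rk
          exact lt_irrefl _ hr0_lt_rk
        · omega
      have := hsorted.rel_get_of_lt hii0
      rw [hi, hi0] at this
      exact absurd hr0_lt_rk (not_lt_of_ge this)
    · -- i = 1 : contradiction
      exfalso
      have hieq : i = ⟨1, h1lt⟩ := Fin.ext h1'
      rw [hieq] at hi
      exact hrk_ne_u (hi.symm.trans hs1)
    · -- i ≥ 2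
      have h12 : (⟨1, h1lt⟩ : Fin L.length) < i := h1'
      have hle := hsorted.rel_get_of_lt h12
      rw [hi] at hle
      have : L.get ⟨1, h1lt⟩ = u := hs1
      rw [this] at hle
      exact lt_of_le_of_ne hle (Ne.symm hrk_ne_u)
  -- final lex argument
  set m := v.length - k with hm
  have hlex : List.Lex (· < ·)
      (v'.take m ++ (v'.drop m ++ [⊥])) (v'.drop k ++ (⊥ :: v'.take k)) := by
    have e1 : v'.take m ++ (v'.drop m ++ [⊥]) = u := by
      rw [hu, ← List.append_assoc, List.take_append_drop]
    have e2 : v'.drop k ++ (⊥ :: v'.take k) = u.rotate k := by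
      rw [hrkeq, List.append_assoc]
      rfl
    rw [e1, e2]
    exact (lt_iff_lex _ _).mp hu_lt_rk
  have hkey := key (v'.take m) (v'.drop k)
    (by simp [hv'len]; omega) (v'.drop m) (v'.take k) ⊥
    (fun e he => hvbot e (List.drop_subset m v' he))
    (by rw [← List.length_pos_iff]; simp [hv'len]; omega)
    hlex (v'.drop m) (v'.take k)
  rw [List.take_append_drop] at hkey
  have hrot : v'.drop k ++ v'.take k = List.map (fun a => WithBot.some a) (v.rotate k) := by
    rw [← List.rotate_eq_drop_append_take (by omega : k ≤ v'.length), hv', List.map_rotate]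
  rw [hrot, hv'] at hkey
  exact (lt_iff_lex _ _).mpr (coe_lex v (v.rotate k) hkey)

end DollarBWT
end
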